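/- Let $M, \tilde M > 0$, $Q, \tilde Q \in \mathbb{R}$ with $Q^2 = \tilde Q^2 \ne 0$, and let $r, \tilde r > 0$ satisfy: (i) $12 M - \frac{24 Q^2}{r} = 12 \tilde M - \frac{24 \tilde Q^2}{\tilde r}$, and (ii) $2 - \frac{12 M}{r} + \frac{12 Q^2}{r^2} = 2 - \frac{12 \tilde M}{\tilde r} + \frac{12 \tilde Q^2}{\tilde r^2}$, where (i) and (ii) hold as $r$ and $\tilde r$ range over nondegenerate intervals related by (i) (equivalently, $\frac{1}{\tilde r} - \frac{1}{r} = \frac{\tilde M - M}{2Q^2} =: E$ is a constant, and (ii) holds for all $r$ in an open interval). Then $M = \tilde M$ and $r = \tilde r$. -/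

import Mathlib

open Set

/-- Final step of the inverse problem: the identities for `B³(a²)` and `B²(a²)`
holding on a nondegenerate interval force `M = M̃` and `r̃ = r`. -/
theorem inverse_problem_final_step
    (M Mt Q Qt : ℝ) (hM : 0 < M) (hMt : 0 < Mt)
    (hQ : Q ^ 2 = Qt ^ 2) (hQne : Q ^ 2 ≠ 0)
    (r0 r1 : ℝ) (hr01 : r0 < r1) (hr0 : 0 < r0)
    (rt : ℝ → ℝ) (hrt_pos : ∀ r ∈ Ioo r0 r1, 0 < rt r)
    (hi : ∀ r ∈ Ioo r0 r1,
      12 * M - 24 * Q ^ 2 / r = 12 * Mt - 24 * Qt ^ 2 / rt r)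
    (hii : ∀ r ∈ Ioo r0 r1,
      2 - 12 * M / r + 12 * Q ^ 2 / r ^ 2 =
        2 - 12 * Mt / rt r + 12 * Qt ^ 2 / (rt r) ^ 2) :
    M = Mt ∧ ∀ r ∈ Ioo r0 r1, rt r = r := by
  have key : ∀ r ∈ Ioo r0 r1, rt r = r := by
    intro r hr
    have hrpos : 0 < r := lt_trans hr0 hr.1
    have hppos : 0 < rt r := hrt_pos r hr
    set p := rt r with hp
    have hA0 := hi r hr
    have hB0 := hii r hr
    rw [← hQ] at hA0 hB0
    have hrne : r ≠ 0 := ne_of_gt hrpos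
    have hpne : p ≠ 0 := ne_of_gt hppos
    have hA : (M - Mt) * r * p = 2 * Q ^ 2 * (p - r) := by
      field_simp [show rt r ≠ 0 from hpne] at hA0
      nlinarith [hA0]
    have hB : Mt * r ^ 2 * p - M * r * p ^ 2 = Q ^ 2 * (r ^ 2 - p ^ 2) := by
      field_simp [show rt r ≠ 0 from hpne] at hB0
      have h12 : (12 : ℝ) * r * p ≠ 0 := by positivity
      apply mul_left_cancel₀ h12
      linear_combination (r * p) * hB0
    have hzero : r * p * (M + Mt) * (r - p) = 0 := by
      linear_combination (r + p) * hA + 2 * hB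
    have h1 : r - p = 0 := by
      have hne : r * p * (M + Mt) ≠ 0 := by positivity
      rcases mul_eq_zero.mp hzero with h | h
      · exact absurd h hne
      · exact h
    linarith
  refine ⟨?_, key⟩
  set r := (r0 + r1) / 2 with hrdef
  have hr : r ∈ Ioo r0 r1 := ⟨by simp [hrdef]; linarith, by simp [hrdef]; linarith⟩
  have hA := hi r hr
  rw [← hQ, key r hr] at hA
  linarith
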